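/- The parameters of any linear [n,k,d]_q code satisfy the Griesmer bound: n ≥ ∑_{i=0}^{k-1} ⌈d / q^i⌉. -/

import Mathlib

open Finset

lemma my_ceilDiv_le_iff {a b c : ℕ} (hb : 0 < b) : a ⌈/⌉ b ≤ c ↔ a ≤ b * c :=
  ceilDiv_le_iff_le_mul hb

lemma my_le_mul_ceilDiv {a b : ℕ} (hb : 0 < b) : a ≤ b * (a ⌈/⌉ b) :=
  (my_ceilDiv_le_iff hb).1 le_rfl

lemma my_ceilDiv_mono {a a' : ℕ} (b : ℕ) (h : a ≤ a') : a ⌈/⌉ b ≤ a' ⌈/⌉ b := by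
  rcases Nat.eq_zero_or_pos b with hb | hb
  · simp [hb]
  · exact (my_ceilDiv_le_iff hb).2 (h.trans (my_le_mul_ceilDiv hb))

lemma my_ceilDiv_ceilDiv (a b c : ℕ) (hb : 0 < b) (hc : 0 < c) :
    (a ⌈/⌉ b) ⌈/⌉ c = a ⌈/⌉ (b * c) := by
  apply le_antisymm
  · rw [my_ceilDiv_le_iff hc, my_ceilDiv_le_iff hb, ← mul_assoc]
    exact my_le_mul_ceilDiv (Nat.mul_pos hb hc)
  · rw [my_ceilDiv_le_iff (Nat.mul_pos hb hc)]
    calc a ≤ b * (a ⌈/⌉ b) := my_le_mul_ceilDiv hb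
    _ ≤ b * (c * ((a ⌈/⌉ b) ⌈/⌉ c)) := Nat.mul_le_mul_left _ (my_le_mul_ceilDiv hc)
    _ = b * c * ((a ⌈/⌉ b) ⌈/⌉ c) := by ring

lemma my_pos_ceilDiv {a b : ℕ} (hb : 0 < b) (ha : 0 < a) : 0 < a ⌈/⌉ b := by
  rcases Nat.eq_zero_or_pos (a ⌈/⌉ b) with h | h
  · have h2 := my_le_mul_ceilDiv (a := a) hb
    rw [h, Nat.mul_zero] at h2
    omega
  · exact h

lemma ceil_cast_eq_ceilDiv (d m : ℕ) (hm : 0 < m) :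
    ⌈(d : ℚ) / (m : ℚ)⌉ = (d ⌈/⌉ m : ℕ) := by
  have hm' : (0:ℚ) < m := by exact_mod_cast hm
  apply le_antisymm
  · rw [Int.ceil_le, div_le_iff₀ hm']
    have := my_le_mul_ceilDiv (a := d) hm
    push_cast
    rw [mul_comm]
    exact_mod_cast this
  · rw [Int.le_ceil_iff]
    have h1 : d ⌈/⌉ m = (d + m - 1) / m := Nat.ceilDiv_eq_add_pred_div d m
    have h2 : m * ((d + m - 1) / m) ≤ d + m - 1 := Nat.mul_div_le _ _
    have h4 : (m:ℚ) * (((d + m - 1) / m : ℕ) : ℚ) < d + m := by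
      exact_mod_cast Nat.lt_of_le_of_lt h2 (by omega)
    have h3 : (((d + m - 1) / m : ℕ) : ℚ) - 1 < (d:ℚ) / m := by
      rw [lt_div_iff₀ hm', sub_mul, one_mul]
      linarith
    rw [h1]
    push_cast at h3 ⊢
    exact h3

lemma griesmer_aux (q : ℕ) (F : Type) [Field F] [Fintype F] [DecidableEq F]
    (hq : Fintype.card F = q) :
    ∀ k : ℕ, ∀ (ι : Type) (_ : Fintype ι) (_ : DecidableEq ι) (d : ℕ)
      (C : Submodule F (ι → F)),
      k ≤ Module.finrank F C → 0 < d →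
      (∀ x ∈ C, x ≠ 0 → d ≤ hammingNorm x) →
      ∑ i ∈ Finset.range k, d ⌈/⌉ q ^ i ≤ Fintype.card ι := by
  have hq2 : 2 ≤ q := hq ▸ Fintype.one_lt_card
  have hq0 : 0 < q := by omega
  intro k
  induction k with
  | zero => simp
  | succ k ih =>
    intro ι inst1 inst2 d C hk hd hmin
    -- a nonzero codeword exists
    have hCbot : C ≠ ⊥ := by
      intro h
      rw [h, finrank_bot] at hk
      omega
    obtain ⟨c₀, hc₀C, hc₀⟩ := Submodule.exists_mem_ne_zero_of_ne_bot hCbot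
    -- minimum weight w
    set W : Set ℕ := {m | ∃ x ∈ C, x ≠ 0 ∧ hammingNorm x = m} with hW
    have hWne : W.Nonempty := ⟨hammingNorm c₀, c₀, hc₀C, hc₀, rfl⟩
    set w : ℕ := sInf W with hwdef
    obtain ⟨c, hcC, hc0, hcw⟩ : ∃ x ∈ C, x ≠ 0 ∧ hammingNorm x = w := Nat.sInf_mem hWne
    have hww : ∀ x ∈ C, x ≠ 0 → w ≤ hammingNorm x := fun x hx hx0 =>
      Nat.sInf_le ⟨x, hx, hx0, rfl⟩
    have hdw : d ≤ w := hcw ▸ hmin c hcC hc0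
    have hw1 : 0 < w := by
      rcases Nat.eq_zero_or_pos w with h | h
      · exact absurd (hammingNorm_eq_zero.1 (hcw.trans h)) hc0
      · exact h
    classical
    -- residual code
    set φ : (ι → F) →ₗ[F] ({i : ι // c i = 0} → F) :=
      LinearMap.funLeft F F Subtype.val with hφ
    have hφc : φ c = 0 := by
      funext i
      exact i.2
    set C' : Submodule F ({i : ι // c i = 0} → F) := C.map φ with hC'
    -- length of residual code
    have hcard : Fintype.card {i : ι // c i = 0} + w = Fintype.card ι := by
      rw [Fintype.card_subtype, ← hcw]
      have h := Finset.card_filter_add_card_filter_not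
        (s := (Finset.univ : Finset ι)) (p := fun i => c i = 0)
      rw [← Finset.card_univ (α := ι), ← h]
      rfl
    -- kernel structure: codewords supported in supp c are multiples of c
    have hker : ∀ x ∈ C, (∀ i, c i = 0 → x i = 0) → ∃ a : F, x = a • c := by
      intro x hx hsupp
      obtain ⟨i₀, hi₀⟩ : ∃ i, c i ≠ 0 := by
        by_contra h
        push_neg at h
        exact hc0 (funext h)
      refine ⟨x i₀ / c i₀, ?_⟩
      set y := x - (x i₀ / c i₀) • c with hy
      have hyC : y ∈ C := Submodule.sub_mem C hx (Submodule.smul_mem C _ hcC)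
      have hyi₀ : y i₀ = 0 := by
        simp only [hy, Pi.sub_apply, Pi.smul_apply, smul_eq_mul]
        field_simp
        ring
      have hysupp : ({i | y i ≠ 0} : Finset ι) ⊆ ({i | c i ≠ 0} : Finset ι).erase i₀ := by
        intro i hi
        simp only [Finset.mem_filter, Finset.mem_univ, true_and] at hi
        rw [Finset.mem_erase]
        constructor
        · rintro rfl
          exact hi hyi₀
        · simp only [Finset.mem_filter, Finset.mem_univ, true_and]
          intro hci
          apply hi
          simp [hy, hsupp i hci, hci]
      have hy0 : y = 0 := by
        by_contra h
        have h1 := hww y hyC h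
        have h2 : hammingNorm y ≤ w - 1 := by
          calc hammingNorm y ≤ (({i | c i ≠ 0} : Finset ι).erase i₀).card :=
              Finset.card_le_card hysupp
          _ = w - 1 := by
              rw [Finset.card_erase_of_mem]
              · rw [← hcw]; rfl
              · simp [hi₀]
        omega
      exact sub_eq_zero.mp hy0
    -- dimension of the residual code
    have hdim : k ≤ Module.finrank F C' := by
      set ψ : C →ₗ[F] ({i : ι // c i = 0} → F) := φ.comp C.subtype with hψ
      have hrange : LinearMap.range ψ = C' := by
        rw [hψ, LinearMap.range_comp, Submodule.range_subtype]
      have hkerle : LinearMap.ker ψ ≤ Submodule.span F {(⟨c, hcC⟩ : C)} := by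
        rintro ⟨x, hx⟩ hxk
        have hx0 : ∀ i, c i = 0 → x i = 0 := by
          intro i hci
          have h1 : ψ ⟨x, hx⟩ = 0 := hxk
          exact congrFun h1 ⟨i, hci⟩
        obtain ⟨a, ha⟩ := hker x hx hx0
        rw [Submodule.mem_span_singleton]
        exact ⟨a, by ext1; simp [ha]⟩
      have h1 : Module.finrank F (LinearMap.ker ψ) ≤ 1 := by
        have hc0' : (⟨c, hcC⟩ : C) ≠ 0 := by
          intro h
          exact hc0 (congrArg Subtype.val h)
        calc Module.finrank F (LinearMap.ker ψ)
            ≤ Module.finrank F (Submodule.span F {(⟨c, hcC⟩ : C)}) :=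
              Submodule.finrank_mono hkerle
          _ = 1 := finrank_span_singleton hc0'
      have h2 := LinearMap.finrank_range_add_finrank_ker ψ
      rw [hrange] at h2
      omega
    -- minimum weight of the residual code
    have hmin' : ∀ y ∈ C', y ≠ 0 → w ⌈/⌉ q ≤ hammingNorm y := by
      rintro y hy hy0
      obtain ⟨x, hxC, rfl⟩ := hy
      set s : Finset ι := ({i | c i ≠ 0} : Finset ι) with hs
      have hscard : s.card = w := hcw
      set g : ι → F := fun i => -(x i) / (c i) with hg
      have hceilw : w ⌈/⌉ q = (w - 1) / q + 1 := by
        rw [Nat.ceilDiv_eq_add_pred_div]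
        have he : w + q - 1 = (w - 1) + q := by omega
        rw [he, Nat.add_div_right _ hq0]
      obtain ⟨a, _, ha⟩ : ∃ a ∈ (Finset.univ : Finset F),
          (w - 1) / q < (s.filter (fun i => g i = a)).card := by
        apply Finset.exists_lt_card_fiber_of_mul_lt_card_of_maps_to
          (fun i _ => Finset.mem_univ (g i))
        rw [hscard, Finset.card_univ, hq]
        have h5 := Nat.div_mul_le_self (w - 1) q
        have : q * ((w - 1) / q) ≤ w - 1 := by
          rw [mul_comm]; exact h5
        omega
      have ha' : w ⌈/⌉ q ≤ (s.filter (fun i => g i = a)).card := by omega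
      set z := x + a • c with hz
      have hzC : z ∈ C := Submodule.add_mem C hxC (Submodule.smul_mem C _ hcC)
      have hφz : φ z = φ x := by
        rw [hz, map_add, map_smul, hφc, smul_zero, add_zero]
      have hz0 : z ≠ 0 := by
        intro h
        apply hy0
        rw [← hφz, h, map_zero]
      have hwz : w ≤ hammingNorm z := hww z hzC hz0
      have hnormy : hammingNorm (φ x)
          = (Finset.univ.filter (fun i => c i = 0 ∧ x i ≠ 0)).card := by
        apply Finset.card_bij (fun (i' : {i : ι // c i = 0}) _ => i'.val)
        · intro i' hi'
          simp only [Finset.mem_filter, Finset.mem_univ, true_and] at hi' ⊢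
          exact ⟨i'.2, hi'⟩
        · intro i1 _ i2 _ h
          exact Subtype.ext h
        · intro i hi
          simp only [Finset.mem_filter, Finset.mem_univ, true_and] at hi
          refine ⟨⟨i, hi.1⟩, ?_, rfl⟩
          simp only [Finset.mem_filter, Finset.mem_univ, true_and]
          exact hi.2
      have hsupp : ({i | z i ≠ 0} : Finset ι) ⊆
          (Finset.univ.filter (fun i => c i = 0 ∧ x i ≠ 0))
            ∪ (s \ s.filter (fun i => g i = a)) := by
        intro i hi
        simp only [Finset.mem_filter, Finset.mem_univ, true_and] at hi
        rw [Finset.mem_union]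
        by_cases hci : c i = 0
        · left
          simp only [Finset.mem_filter, Finset.mem_univ, true_and]
          refine ⟨hci, ?_⟩
          intro hxi
          apply hi
          simp [hz, hci, hxi]
        · right
          rw [Finset.mem_sdiff]
          constructor
          · simp [hs, hci]
          · rw [Finset.mem_filter]
            rintro ⟨-, hgi⟩
            apply hi
            rw [hg] at hgi
            have : x i = -(a * c i) := by
              field_simp at hgi
              linear_combination -hgi
            simp [hz, this]
      have hfibsub : s.filter (fun i => g i = a) ⊆ s := Finset.filter_subset _ _
      have hfible : (s.filter (fun i => g i = a)).card ≤ w :=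
        hscard ▸ Finset.card_le_card hfibsub
      have hsd : (s \ s.filter (fun i => g i = a)).card
          = w - (s.filter (fun i => g i = a)).card := by
        rw [Finset.card_sdiff_of_subset hfibsub, hscard]
      have hzcount : hammingNorm z
          ≤ hammingNorm (φ x) + (w - (s.filter (fun i => g i = a)).card) := by
        calc hammingNorm z ≤ ((Finset.univ.filter (fun i => c i = 0 ∧ x i ≠ 0))
              ∪ (s \ s.filter (fun i => g i = a))).card := Finset.card_le_card hsupp
          _ ≤ (Finset.univ.filter (fun i => c i = 0 ∧ x i ≠ 0)).card
              + (s \ s.filter (fun i => g i = a)).card := Finset.card_union_le _ _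
          _ = hammingNorm (φ x) + (w - (s.filter (fun i => g i = a)).card) := by
              rw [hnormy, hsd]
      omega
    -- apply the induction hypothesis
    have hih := ih {i : ι // c i = 0} inferInstance inferInstance (w ⌈/⌉ q) C'
      hdim (my_pos_ceilDiv hq0 hw1) hmin'
    have hrw : ∀ i : ℕ, (w ⌈/⌉ q) ⌈/⌉ q ^ i = w ⌈/⌉ q ^ (i + 1) := by
      intro i
      rw [my_ceilDiv_ceilDiv _ _ _ hq0 (pow_pos hq0 i), ← pow_succ']
    calc ∑ i ∈ Finset.range (k + 1), d ⌈/⌉ q ^ i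
        ≤ ∑ i ∈ Finset.range (k + 1), w ⌈/⌉ q ^ i :=
          Finset.sum_le_sum (fun i _ => my_ceilDiv_mono _ hdw)
      _ = (∑ i ∈ Finset.range k, w ⌈/⌉ q ^ (i + 1)) + w ⌈/⌉ q ^ 0 :=
          Finset.sum_range_succ' _ _
      _ = (∑ i ∈ Finset.range k, (w ⌈/⌉ q) ⌈/⌉ q ^ i) + w := by
          simp [hrw]
      _ ≤ Fintype.card {i : ι // c i = 0} + w := by
          exact Nat.add_le_add_right hih w
      _ = Fintype.card ι := hcard

/-- **Griesmer bound.** The parameters of any linear `[n,k,d]_q` code satisfy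
`n ≥ ∑_{i=0}^{k-1} ⌈d / qⁱ⌉`.  Here a linear `[n,k,d]_q` code is a `k`-dimensional
subspace `C` of `GF(q)ⁿ` whose minimum Hamming weight among nonzero codewords is `d`. -/
theorem griesmer_bound (q n k d : ℕ) (F : Type) [Field F] [Fintype F] [DecidableEq F]
    (hq : Fintype.card F = q)
    (C : Submodule F (Fin n → F))
    (hk : Module.finrank F C = k)
    (hd_le : ∀ c ∈ C, c ≠ 0 → d ≤ hammingNorm c)
    (hd_ex : ∃ c ∈ C, c ≠ 0 ∧ hammingNorm c = d) :
    (∑ i ∈ Finset.range k, ⌈(d : ℚ) / (q : ℚ) ^ i⌉) ≤ (n : ℤ) := by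
  have hq2 : 2 ≤ q := hq ▸ Fintype.one_lt_card
  have hd0 : 0 < d := by
    obtain ⟨c, hc, hc0, hcd⟩ := hd_ex
    rcases Nat.eq_zero_or_pos d with h | h
    · rw [h] at hcd
      exact absurd (hammingNorm_eq_zero.1 hcd) hc0
    · exact h
  have haux := griesmer_aux q F hq k (Fin n) inferInstance inferInstance d C
    (le_of_eq hk.symm) hd0 hd_le
  rw [Fintype.card_fin] at haux
  have hterm : ∀ i : ℕ, ⌈(d : ℚ) / (q : ℚ) ^ i⌉ = ((d ⌈/⌉ q ^ i : ℕ) : ℤ) := by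
    intro i
    have hc : ((q : ℚ)) ^ i = ((q ^ i : ℕ) : ℚ) := by push_cast; ring
    rw [hc, ceil_cast_eq_ceilDiv d (q ^ i) (pow_pos (by omega) i)]
  calc ∑ i ∈ Finset.range k, ⌈(d : ℚ) / (q : ℚ) ^ i⌉
      = ∑ i ∈ Finset.range k, ((d ⌈/⌉ q ^ i : ℕ) : ℤ) :=
        Finset.sum_congr rfl fun i _ => hterm i
    _ = ((∑ i ∈ Finset.range k, d ⌈/⌉ q ^ i : ℕ) : ℤ) := by push_cast; rfl
    _ ≤ (n : ℤ) := by exact_mod_cast haux
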